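/- arXiv:2012.09729 — 7 statements merged into one kernel-verified Lean document; each statement's English description precedes it below -/
import Mathlib

section
/- For every real number v in [0,1] and every positive integer N, the maximum of min_{j∈ℕ}|Nv−j| and min_{j∈ℕ}|(N+1)v−j| is at least (min(v, 1−v))/2. -/
open MeasureTheory Filter Set

/-- Distance from `x` to the nearest nonnegative integer. -/
noncomputable def nnd (x : ℝ) : ℝ := ⨅ j : ℕ, |x - (j : ℝ)|

lemma key_min_le (v : ℝ) (hv : v ∈ Set.Icc (0 : ℝ) 1) (m : ℤ) :
    min v (1 - v) ≤ |v - (m : ℝ)| := by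
  obtain ⟨h0, h1⟩ := hv
  rcases le_or_gt m 0 with h | h
  · have hm : (m : ℝ) ≤ 0 := by exact_mod_cast h
    exact le_trans (min_le_left _ _) (le_abs.mpr (Or.inl (by linarith)))
  · have hm : (1 : ℝ) ≤ (m : ℝ) := by exact_mod_cast h
    exact le_trans (min_le_right _ _) (le_abs.mpr (Or.inr (by linarith)))

theorem stmt0 (v : ℝ) (hv : v ∈ Set.Icc (0 : ℝ) 1) (N : ℕ) (hN : 0 < N) :
    min v (1 - v) / 2 ≤ max (nnd ((N : ℝ) * v)) (nnd (((N : ℝ) + 1) * v)) := by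
  have h1 : min v (1 - v) - nnd (((N : ℝ) + 1) * v) ≤ nnd ((N : ℝ) * v) := by
    rw [nnd]
    refine le_ciInf fun j => ?_
    have h2 : min v (1 - v) - |(N : ℝ) * v - j| ≤ nnd (((N : ℝ) + 1) * v) := by
      rw [nnd]
      refine le_ciInf fun k => ?_
      have hk := key_min_le v hv ((k : ℤ) - j)
      have heq : v - (((k : ℤ) - (j : ℤ) : ℤ) : ℝ)
          = (((N : ℝ) + 1) * v - k) - ((N : ℝ) * v - j) := by push_cast; ring
      have htri : |(((N : ℝ) + 1) * v - k) - ((N : ℝ) * v - j)|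
          ≤ |((N : ℝ) + 1) * v - k| + |(N : ℝ) * v - j| := abs_sub _ _
      rw [heq] at hk
      linarith
    rw [nnd] at h2
    linarith
  have hb : nnd ((N : ℝ) * v) ≤ max (nnd ((N : ℝ) * v)) (nnd (((N : ℝ) + 1) * v)) :=
    le_max_left _ _
  have hc : nnd (((N : ℝ) + 1) * v) ≤ max (nnd ((N : ℝ) * v)) (nnd (((N : ℝ) + 1) * v)) :=
    le_max_right _ _
  linarith
end

section
/- For every ρ ≥ 1, every γ > 0, and all nonnegative reals a, b, one has |b^ρ − a^ρ| ≤ γ(ρ−1)(a^ρ + b^ρ) + γ^{1−ρ}|b−a|^ρ. -/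
open Real

lemma young_aux {ρ γ x y : ℝ} (hρ : 1 < ρ) (hγ : 0 < γ) (hx : 0 ≤ x) (hy : 0 ≤ y) :
    ρ * x ^ (ρ - 1) * y ≤ γ * (ρ - 1) * x ^ ρ + γ ^ (1 - ρ) * y ^ ρ := by
  have hρ0 : (0:ℝ) < ρ := by linarith
  set c : ℝ := (γ * ρ) ^ (1/ρ) with hc
  have hc0 : 0 < c := Real.rpow_pos_of_pos (by positivity) _
  have hcρ : c ^ ρ = γ * ρ := by
    rw [hc, ← Real.rpow_mul (by positivity), one_div_mul_cancel hρ0.ne', Real.rpow_one]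
  have hpq : (ρ/(ρ-1)).HolderConjugate ρ := by
    rw [Real.holderConjugate_iff]
    constructor
    · rw [lt_div_iff₀ (by linarith)]; linarith
    · field_simp; ring
  have hyoung := Real.young_inequality_of_nonneg
    (a := (c*x)^(ρ-1)) (b := ρ * y / c^(ρ-1))
    (Real.rpow_nonneg (by positivity) _) (by positivity) hpq
  have h1 : ((c*x)^(ρ-1)) ^ (ρ/(ρ-1)) = c^ρ * x^ρ := by
    rw [← Real.rpow_mul (by positivity), mul_div_cancel₀ _ (by linarith : ρ - 1 ≠ 0),
      Real.mul_rpow hc0.le hx]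
  have h2 : (ρ * y / c^(ρ-1)) ^ ρ = ρ^ρ * y^ρ / (c^(ρ-1))^ρ := by
    rw [Real.div_rpow (by positivity) (by positivity), Real.mul_rpow hρ0.le hy]
  have h3 : (c*x)^(ρ-1) * (ρ * y / c^(ρ-1)) = ρ * x^(ρ-1) * y := by
    rw [Real.mul_rpow hc0.le hx]
    field_simp [(Real.rpow_pos_of_pos hc0 (ρ-1)).ne']
  have h4 : (c^(ρ-1))^ρ = (γ*ρ)^(ρ-1) := by
    rw [← Real.rpow_mul hc0.le, mul_comm (ρ-1) ρ, Real.rpow_mul hc0.le, hcρ]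
  rw [h1, h2, h3, h4] at hyoung
  have h5 : c^ρ * x^ρ / (ρ/(ρ-1)) = γ * (ρ-1) * x^ρ := by
    rw [hcρ]; field_simp
  have h6 : ρ^ρ * y^ρ / (γ*ρ)^(ρ-1) / ρ = γ^(1-ρ) * y^ρ := by
    rw [Real.mul_rpow hγ.le hρ0.le]
    rw [show (1:ℝ) - ρ = -(ρ-1) by ring, Real.rpow_neg hγ.le]
    have hρρ : ρ^ρ = ρ^(ρ-1) * ρ := by
      rw [← Real.rpow_add_one hρ0.ne' (ρ-1)]; ring_nf
    rw [hρρ]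
    field_simp
  rw [h5, h6] at hyoung
  exact hyoung

lemma mvt_aux {ρ a b : ℝ} (hρ : 1 ≤ ρ) (ha : 0 ≤ a) (hab : a ≤ b) :
    b ^ ρ - a ^ ρ ≤ ρ * b ^ (ρ - 1) * (b - a) := by
  have hb : 0 ≤ b := le_trans ha hab
  rcases eq_or_lt_of_le hb with h | hb0
  · have hb0 : b = 0 := h.symm
    have ha0 : a = 0 := le_antisymm (hb0 ▸ hab) ha
    simp [ha0, hb0]
  · have hs : -1 ≤ a / b - 1 := by
      have : 0 ≤ a / b := by positivity
      linarith
    have hber := one_add_mul_self_le_rpow_one_add hs hρ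
    have heq : (1:ℝ) + (a/b - 1) = a / b := by ring
    rw [heq, Real.div_rpow ha hb0.le] at hber
    have hbp : 0 < b ^ ρ := Real.rpow_pos_of_pos hb0 ρ
    rw [le_div_iff₀ hbp] at hber
    have hb1 : b ^ (ρ-1) * b = b ^ ρ := by
      rw [← Real.rpow_add_one hb0.ne' (ρ-1)]; ring_nf
    have hba : ρ * b^(ρ-1) * (b - a) = ρ * b^ρ - ρ * b^(ρ-1) * a := by
      rw [mul_sub]; rw [show ρ * b^(ρ-1) * b = ρ * (b^(ρ-1) * b) by ring, hb1]
    rw [hba]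
    have : b^ρ * (a/b) = b^(ρ-1) * a := by
      field_simp [hb0.ne']
      linear_combination (-a) * hb1
    nlinarith [this, hber]

lemma key_aux {ρ γ a b : ℝ} (hρ : 1 ≤ ρ) (hγ : 0 < γ) (ha : 0 ≤ a) (hab : a ≤ b) :
    b ^ ρ - a ^ ρ ≤ γ * (ρ - 1) * (a ^ ρ + b ^ ρ) + γ ^ (1 - ρ) * (b - a) ^ ρ := by
  have hb : 0 ≤ b := le_trans ha hab
  have h1 := mvt_aux hρ ha hab
  rcases eq_or_lt_of_le hρ with h | hρ1
  · subst h
    simp [Real.rpow_one]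
  · have h2 := young_aux hρ1 hγ hb (by linarith : (0:ℝ) ≤ b - a)
    have h3 : 0 ≤ a ^ ρ := Real.rpow_nonneg ha ρ
    have hγ1 : 0 ≤ γ * (ρ - 1) := mul_nonneg hγ.le (by linarith)
    nlinarith

theorem stmt3 (ρ γ a b : ℝ) (hρ : 1 ≤ ρ) (hγ : 0 < γ) (ha : 0 ≤ a) (hb : 0 ≤ b) :
    |b ^ ρ - a ^ ρ| ≤ γ * (ρ - 1) * (a ^ ρ + b ^ ρ) + γ ^ (1 - ρ) * |b - a| ^ ρ := by
  rcases le_total a b with h | h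
  · rw [abs_of_nonneg (by linarith : (0:ℝ) ≤ b - a),
      abs_of_nonneg (sub_nonneg.mpr (Real.rpow_le_rpow ha h (le_trans zero_le_one hρ)))]
    exact key_aux hρ hγ ha h
  · rw [abs_sub_comm, abs_sub_comm b a,
      abs_of_nonneg (by linarith : (0:ℝ) ≤ a - b),
      abs_of_nonneg (sub_nonneg.mpr (Real.rpow_le_rpow hb h (le_trans zero_le_one hρ)))]
    have := key_aux hρ hγ hb h
    linarith [this, add_comm (a^ρ) (b^ρ)]
end

section
/- Let μ be a probability measure on ℝ with cdf F. Let (V,Z) be distributed as (uniform on [0,1]) ⊗ μ, independent. Then the random variable F(Z−) + V·μ({Z}) is uniformly distributed on [0,1]. -/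
open MeasureTheory ProbabilityTheory Filter Set
open scoped Topology ENNReal

lemma stmt5_key (μ : Measure ℝ) [IsProbabilityMeasure μ] {t : ℝ} (ht0 : 0 < t) (ht1 : t < 1) :
    ∫⁻ z, (volume.restrict (Icc (0:ℝ) 1))
        {v : ℝ | Function.leftLim (fun x => cdf μ x) z + v * (μ {z}).toReal ≤ t} ∂μ
      = ENNReal.ofReal t := by
  set F : StieltjesFunction ℝ := cdf μ with hFdef
  set L : ℝ → ℝ := Function.leftLim (fun x => cdf μ x) with hLdef
  have hLcoe : L = Function.leftLim (F : ℝ → ℝ) := rfl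
  have hLF : ∀ x, L x ≤ F x := fun x => F.mono.leftLim_le le_rfl
  have hL0 : ∀ x, 0 ≤ L x := fun x => (cdf_nonneg μ (x-1)).trans (F.mono.le_leftLim (sub_one_lt x))
  have hsingle : ∀ z, μ {z} = ENNReal.ofReal (F z - L z) := fun z => by
    conv_lhs => rw [← measure_cdf μ]
    exact (cdf μ).measure_singleton z
  have hc : ∀ z, (μ {z}).toReal = F z - L z := fun z => by
    rw [hsingle z, ENNReal.toReal_ofReal (sub_nonneg.2 (hLF z))]
  set g : ℝ → ℝ≥0∞ := fun z =>
    (volume.restrict (Icc (0:ℝ) 1)) {v : ℝ | L z + v * (μ {z}).toReal ≤ t} with hgdef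
  -- quantile
  set S : Set ℝ := {x | t ≤ F x} with hSdef
  have hS_ne : S.Nonempty := by
    obtain ⟨x, hx⟩ := ((tendsto_cdf_atTop μ).eventually (eventually_ge_nhds ht1)).exists
    exact ⟨x, hx⟩
  have hS_bdd : BddBelow S := by
    obtain ⟨x₀, hx₀⟩ := eventually_atBot.1 ((tendsto_cdf_atBot μ).eventually (eventually_lt_nhds ht0))
    exact ⟨x₀, fun s hs => le_of_not_gt fun h => absurd hs (not_le.2 (hx₀ s h.le))⟩
  set a : ℝ := sInf S with hadef
  have ha_mem : t ≤ F a := by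
    by_contra hFa
    have hlt : F a < t := lt_of_not_ge hFa
    have h2 : ∀ᶠ y in 𝓝[Ici a] a, F y < t :=
      (F.right_continuous a).eventually (eventually_lt_nhds hlt)
    rw [eventually_nhdsWithin_iff, Metric.eventually_nhds_iff] at h2
    obtain ⟨ε, hε, hball⟩ := h2
    have hlb : a + ε / 2 ≤ a := by
      refine le_csInf hS_ne fun s hs => ?_
      by_contra hcon
      have hsa : a ≤ s := csInf_le hS_bdd hs
      have : F s < t := hball (by rw [Real.dist_eq]; rw [abs_of_nonneg (by linarith)]; linarith) hsa
      exact absurd hs (not_le.2 this)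
    linarith
  have hLa : L a ≤ t := by
    refine le_of_tendsto (F.mono.tendsto_leftLim a) ?_
    filter_upwards [self_mem_nhdsWithin] with y (hy : y < a)
    by_contra hcon
    exact absurd (csInf_le hS_bdd (le_of_not_ge hcon)) (not_le.2 hy)
  -- split the integral
  have hsplit : ∫⁻ z, g z ∂μ =
      (∫⁻ z in Iio a, g z ∂μ) + ((∫⁻ z in {a}, g z ∂μ) + ∫⁻ z in Ioi a, g z ∂μ) := by
    rw [← lintegral_union measurableSet_Ioi
        (Set.disjoint_singleton_left.mpr (by simp) : Disjoint ({a} : Set ℝ) (Ioi a)),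
      ← insert_eq, Ioi_insert, ← lintegral_add_compl g measurableSet_Iio, compl_Iio]
  have hvol : ∀ s : Set ℝ, (volume.restrict (Icc (0:ℝ) 1)) s = volume (s ∩ Icc (0:ℝ) 1) :=
    fun s => Measure.restrict_apply' measurableSet_Icc
  -- piece 1
  have hIio : μ (Iio a) = ENNReal.ofReal (L a) := by
    have hL1 : L a ≤ 1 := (hLF a).trans (cdf_le_one μ a)
    have hIci : μ (Ici a) = ENNReal.ofReal (1 - L a) := by
      conv_lhs => rw [← measure_cdf μ]
      exact (cdf μ).measure_Ici (tendsto_cdf_atTop μ) a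
    have h := measure_compl (measurableSet_Ici (a := a)) (measure_ne_top μ _)
    rw [compl_Ici, hIci, measure_univ] at h
    rw [h, ← ENNReal.ofReal_one, ← ENNReal.ofReal_sub _ (by linarith)]
    norm_num
  have hpiece1 : ∫⁻ z in Iio a, g z ∂μ = ENNReal.ofReal (L a) := by
    rw [setLIntegral_congr_fun measurableSet_Iio
        (fun z (hz : z < a) => ?_), setLIntegral_one, hIio]
    have hFz : F z < t := by
      by_contra hcon
      exact absurd (csInf_le hS_bdd (not_lt.1 hcon)) (not_le.2 hz)
    have hsub : Icc (0:ℝ) 1 ⊆ {v : ℝ | L z + v * (μ {z}).toReal ≤ t} := by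
      intro v hv
      have hvc : v * (μ {z}).toReal ≤ F z - L z := by
        rw [hc z]
        calc v * (F z - L z) ≤ 1 * (F z - L z) :=
          mul_le_mul_of_nonneg_right hv.2 (sub_nonneg.2 (hLF z))
        _ = F z - L z := one_mul _
      simp only [mem_setOf_eq]
      linarith
    rw [hgdef]
    simp only
    rw [hvol, inter_eq_self_of_subset_right hsub, Real.volume_Icc]
    norm_num
  -- piece 2
  have hpiece2 : ∫⁻ z in {a}, g z ∂μ = ENNReal.ofReal (t - L a) := by
    rw [lintegral_singleton]
    rcases eq_or_lt_of_le (hLF a) with heq | hlt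
    · have hμa : μ {a} = 0 := by rw [hsingle a, ← heq, sub_self, ENNReal.ofReal_zero]
      have hta : t = L a := le_antisymm (heq ▸ ha_mem) hLa
      rw [hμa, mul_zero, ← hta, sub_self, ENNReal.ofReal_zero]
    · set q : ℝ := (t - L a) / (F a - L a) with hqdef
      have hpos : (0:ℝ) < F a - L a := sub_pos.2 hlt
      have hq0 : 0 ≤ q := div_nonneg (by linarith) hpos.le
      have hq1 : q ≤ 1 := (div_le_one hpos).2 (by linarith)
      have hset : {v : ℝ | L a + v * (μ {a}).toReal ≤ t} = Iic q := by
        ext v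
        simp only [mem_setOf_eq, mem_Iic, hc a, hqdef]
        rw [le_div_iff₀ hpos]
        constructor <;> intro h <;> linarith
      have hga : g a = ENNReal.ofReal q := by
        rw [hgdef]
        simp only
        rw [hset, hvol]
        have : Iic q ∩ Icc (0:ℝ) 1 = Icc 0 q := by
          ext v
          simp only [mem_inter_iff, mem_Iic, mem_Icc]
          constructor
          · rintro ⟨h1, h2, h3⟩; exact ⟨h2, h1⟩
          · rintro ⟨h1, h2⟩; exact ⟨h2, h1, h2.trans hq1⟩
        rw [this, Real.volume_Icc, sub_zero]
      rw [hga, hsingle a, ← ENNReal.ofReal_mul hq0, hqdef, div_mul_cancel₀ _ hpos.ne']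
  -- piece 3
  set N : Set ℝ := {z | a < z ∧ F z ≤ t} with hNdef
  have hN : μ N = 0 := by
    rcases N.eq_empty_or_nonempty with h | h
    · rw [h, measure_empty]
    · obtain ⟨z₀, hz₀⟩ := h
      have hFa_eq : F a = t := le_antisymm ((F.mono hz₀.1.le).trans hz₀.2) ha_mem
      have hbdd : BddAbove N := by
        by_contra hcon
        obtain ⟨x, hx⟩ := ((tendsto_cdf_atTop μ).eventually (eventually_gt_nhds ht1)).exists
        obtain ⟨z, hzN, hxz⟩ := not_bddAbove_iff.1 hcon x
        exact absurd ((hx.trans_le (F.mono hxz.le)).trans_le hzN.2) (lt_irrefl t)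
      set b : ℝ := sSup N with hbdef
      by_cases hb : b ∈ N
      · have hsub : N ⊆ Ioc a b := fun z hz => ⟨hz.1, le_csSup hbdd hz⟩
        have : μ (Ioc a b) = 0 := by
          conv_lhs => rw [← measure_cdf μ]
          rw [(cdf μ).measure_Ioc, ENNReal.ofReal_eq_zero]
          have : F b ≤ t := hb.2
          show F b - F a ≤ 0
          rw [hFa_eq]; linarith
        exact le_antisymm (le_trans (measure_mono hsub) this.le) zero_le
      · have hsub : N ⊆ Ioo a b := fun z hz =>
          ⟨hz.1, lt_of_le_of_ne (le_csSup hbdd hz) fun h => hb (h ▸ hz)⟩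
        have hLb : L b ≤ t := by
          refine le_of_tendsto (F.mono.tendsto_leftLim b) ?_
          filter_upwards [self_mem_nhdsWithin] with y (hy : y < b)
          obtain ⟨z', hz'N, hyz'⟩ := exists_lt_of_lt_csSup ⟨z₀, hz₀⟩ hy
          exact (F.mono hyz'.le).trans hz'N.2
        have : μ (Ioo a b) = 0 := by
          conv_lhs => rw [← measure_cdf μ]
          rw [(cdf μ).measure_Ioo, ENNReal.ofReal_eq_zero]
          show L b - F a ≤ 0
          rw [hFa_eq]; linarith
        exact le_antisymm (le_trans (measure_mono hsub) this.le) zero_le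
  have hpiece3 : ∫⁻ z in Ioi a, g z ∂μ = 0 := by
    have hae : ∀ᵐ z ∂μ, z ∈ Ioi a → g z = 0 := by
      rw [ae_iff]
      refine measure_mono_null (fun z hz => ?_) hN
      simp only [mem_setOf_eq, not_forall] at hz
      obtain ⟨hza, hgz⟩ := hz
      -- show z ∈ N
      have hza' : a < z := hza
      have hLz : t ≤ L z := by
        have h1 : a < (a + z) / 2 := by linarith
        have h2 : (a + z) / 2 < z := by linarith
        exact le_trans (ha_mem.trans (F.mono h1.le)) (F.mono.le_leftLim h2)
      by_cases hcz : (μ {z}).toReal = 0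
      · -- F z = L z; if F z > t then set empty
        have hFL : F z = L z := by rw [hc z] at hcz; linarith
        refine ⟨hza', ?_⟩
        by_contra hcon
        have hFz : t < F z := not_le.1 hcon
        apply hgz
        rw [hgdef]
        simp only
        convert measure_empty (μ := volume.restrict (Icc (0:ℝ) 1))
        ext v
        simp only [mem_setOf_eq, mem_empty_iff_false, iff_false, not_le, hcz, mul_zero, add_zero]
        rw [hFL] at hFz; exact hFz
      · -- c z > 0 : measure zero anyway, contradiction with hgz
        exfalso
        apply hgz
        have hcpos : 0 < (μ {z}).toReal := lt_of_le_of_ne ENNReal.toReal_nonneg (Ne.symm hcz)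
        have hsub : {v : ℝ | L z + v * (μ {z}).toReal ≤ t} ∩ Icc (0:ℝ) 1 ⊆ {0} := by
          rintro v ⟨hv1, hv2, _⟩
          simp only [mem_setOf_eq] at hv1
          have : v * (μ {z}).toReal ≤ 0 := by linarith
          have hv0 : v ≤ 0 := nonpos_of_mul_nonpos_right ?_ hcpos
          · exact le_antisymm hv0 hv2
          · linarith
        rw [hgdef]
        simp only
        rw [hvol]
        exact le_antisymm (le_trans (measure_mono hsub) (by simp)) zero_le
    calc ∫⁻ z in Ioi a, g z ∂μ = ∫⁻ _ in Ioi a, 0 ∂μ :=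
      lintegral_congr_ae ((ae_restrict_iff' measurableSet_Ioi).2 hae)
    _ = 0 := lintegral_const 0 |>.trans (zero_mul _)
  rw [hsplit, hpiece1, hpiece2, hpiece3, add_zero,
    ← ENNReal.ofReal_add (hL0 a) (by linarith : (0:ℝ) ≤ t - L a)]
  ring_nf

theorem stmt5 (μ : Measure ℝ) [IsProbabilityMeasure μ] :
    Measure.map
        (fun p : ℝ × ℝ =>
          Function.leftLim (fun x => cdf μ x) p.2 + p.1 * (μ {p.2}).toReal)
        ((volume.restrict (Set.Icc (0 : ℝ) 1)).prod μ)
      = volume.restrict (Set.Icc (0 : ℝ) 1) := by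
  set F : StieltjesFunction ℝ := cdf μ with hFdef
  set L : ℝ → ℝ := Function.leftLim (fun x => cdf μ x) with hLdef
  have hLF : ∀ x, L x ≤ F x := fun x => F.mono.leftLim_le le_rfl
  have hL0 : ∀ x, 0 ≤ L x := fun x => (cdf_nonneg μ (x-1)).trans (F.mono.le_leftLim (sub_one_lt x))
  have hc : ∀ z, (μ {z}).toReal = F z - L z := fun z => by
    have hsingle : μ {z} = ENNReal.ofReal (F z - L z) := by
      conv_lhs => rw [← measure_cdf μ]
      exact (cdf μ).measure_singleton z
    rw [hsingle, ENNReal.toReal_ofReal (sub_nonneg.2 (hLF z))]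
  have hcnn : ∀ z, 0 ≤ (μ {z}).toReal := fun z => ENNReal.toReal_nonneg
  set G : ℝ × ℝ → ℝ := fun p => L p.2 + p.1 * (μ {p.2}).toReal with hGdef
  have hG : Measurable G := by
    have h1 : Measurable L := (F.mono.leftLim).measurable
    have h2 : Measurable fun z : ℝ => (μ {z}).toReal := by
      have : (fun z : ℝ => (μ {z}).toReal) = fun z => F z - L z := funext hc
      rw [this]
      exact F.mono.measurable.sub h1
    exact (h1.comp measurable_snd).add (measurable_fst.mul (h2.comp measurable_snd))
  have hvol : ∀ s : Set ℝ, (volume.restrict (Icc (0:ℝ) 1)) s = volume (s ∩ Icc (0:ℝ) 1) :=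
    fun s => Measure.restrict_apply' measurableSet_Icc
  haveI hP : IsProbabilityMeasure (volume.restrict (Icc (0:ℝ) 1)) :=
    ⟨by rw [hvol, univ_inter, Real.volume_Icc]; norm_num⟩
  haveI : IsProbabilityMeasure
      (Measure.map G ((volume.restrict (Icc (0:ℝ) 1)).prod μ)) :=
    Measure.isProbabilityMeasure_map hG.aemeasurable
  have happly : ∀ t : ℝ,
      Measure.map G ((volume.restrict (Icc (0:ℝ) 1)).prod μ) (Iic t)
        = ∫⁻ z, (volume.restrict (Icc (0:ℝ) 1)) {v : ℝ | L z + v * (μ {z}).toReal ≤ t} ∂μ := by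
    intro t
    rw [Measure.map_apply hG measurableSet_Iic,
      Measure.prod_apply_symm (hG measurableSet_Iic)]
    rfl
  have hkey : ∀ t : ℝ, 0 < t → t < 1 →
      Measure.map G ((volume.restrict (Icc (0:ℝ) 1)).prod μ) (Iic t) = ENNReal.ofReal t :=
    fun t ht0 ht1 => (happly t).trans (stmt5_key μ ht0 ht1)
  refine Measure.ext_of_Iic _ _ fun t => ?_
  rcases le_or_gt t 0 with ht | ht0
  · -- t ≤ 0 : both sides are 0
    have hrhs : (volume.restrict (Icc (0:ℝ) 1)) (Iic t) = 0 := by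
      rw [hvol]
      refine le_antisymm ?_ zero_le
      have hsub : Iic t ∩ Icc (0:ℝ) 1 ⊆ {0} :=
        fun v hv => mem_singleton_iff.2 (le_antisymm (hv.1.trans ht) hv.2.1)
      calc volume (Iic t ∩ Icc (0:ℝ) 1) ≤ volume ({0} : Set ℝ) := measure_mono hsub
        _ = 0 := Real.volume_singleton
    rw [hrhs]
    refine le_antisymm ?_ zero_le
    have hb : ∀ t' : ℝ, 0 < t' → t' < 1 →
        Measure.map G ((volume.restrict (Icc (0:ℝ) 1)).prod μ) (Iic t) ≤ ENNReal.ofReal t' :=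
      fun t' h0 h1 => (measure_mono (Iic_subset_Iic.2 (ht.trans h0.le))).trans (hkey t' h0 h1).le
    refine ENNReal.le_of_forall_pos_le_add fun ε hε _ => ?_
    have h2 : (0:ℝ) < min (ε/2 : ℝ) (1/2) := lt_min (by positivity) (by norm_num)
    calc Measure.map G ((volume.restrict (Icc (0:ℝ) 1)).prod μ) (Iic t)
        ≤ ENNReal.ofReal (min (ε/2 : ℝ) (1/2)) :=
          hb _ h2 (lt_of_le_of_lt (min_le_right _ _) (by norm_num))
      _ ≤ 0 + ε := by
          rw [zero_add, ← ENNReal.ofReal_coe_nnreal]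
          refine ENNReal.ofReal_le_ofReal ?_
          calc min (ε/2 : ℝ) (1/2) ≤ ε/2 := min_le_left _ _
            _ ≤ ε := by
                have : (0:ℝ) ≤ (ε:ℝ) := ε.coe_nonneg
                linarith
  rcases lt_or_ge t 1 with ht1 | ht1
  · -- 0 < t < 1
    rw [hkey t ht0 ht1, hvol]
    have : Iic t ∩ Icc (0:ℝ) 1 = Icc 0 t := by
      ext v
      simp only [mem_inter_iff, mem_Iic, mem_Icc]
      exact ⟨fun ⟨h1, h2, _⟩ => ⟨h2, h1⟩, fun ⟨h1, h2⟩ => ⟨h2, h1, h2.trans ht1.le⟩⟩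
    rw [this, Real.volume_Icc, sub_zero]
  · -- 1 ≤ t
    have hrhs : (volume.restrict (Icc (0:ℝ) 1)) (Iic t) = 1 := by
      rw [hvol, inter_eq_self_of_subset_right (fun v hv => hv.2.trans ht1), Real.volume_Icc]
      norm_num
    rw [happly t, hrhs]
    have : ∀ z : ℝ, (volume.restrict (Icc (0:ℝ) 1)) {v : ℝ | L z + v * (μ {z}).toReal ≤ t} = 1 := by
      intro z
      have hsub : Icc (0:ℝ) 1 ⊆ {v : ℝ | L z + v * (μ {z}).toReal ≤ t} := by
        intro v hv
        have h1 : v * (μ {z}).toReal ≤ F z - L z := by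
          rw [hc z]
          calc v * (F z - L z) ≤ 1 * (F z - L z) :=
            mul_le_mul_of_nonneg_right hv.2 (sub_nonneg.2 (hLF z))
          _ = F z - L z := one_mul _
        have h2 : F z ≤ 1 := cdf_le_one μ z
        simp only [mem_setOf_eq]
        linarith
      rw [hvol, inter_eq_self_of_subset_right hsub, Real.volume_Icc]
      norm_num
    simp_rw [this]
    rw [lintegral_one, measure_univ]
end

section
/- Let μ be a probability measure on ℝ with cdf F and quantile function F^{-1}. Then for almost every (v,z) with respect to the product of the uniform distribution on [0,1] and μ, one has F^{-1}(F(z−) + v·μ({z})) = z. -/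
open MeasureTheory ProbabilityTheory Filter Set

/-- Left-continuous quantile function of `μ`. -/
noncomputable def qf (μ : Measure ℝ) (u : ℝ) : ℝ := sInf {x : ℝ | u ≤ cdf μ x}

theorem stmt6 (μ : Measure ℝ) [IsProbabilityMeasure μ] :
    ∀ᵐ p : ℝ × ℝ ∂((volume.restrict (Set.Icc (0 : ℝ) 1)).prod μ),
      qf μ (Function.leftLim (fun x => cdf μ x) p.2 + p.1 * (μ {p.2}).toReal) = p.2 := by
  have hmono : Monotone (cdf μ : ℝ → ℝ) := monotone_cdf μ
  have hmeas : (cdf μ).measure = μ := measure_cdf μ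
  have hIoc : ∀ x z : ℝ, μ (Ioc x z) = ENNReal.ofReal (cdf μ z - cdf μ x) := fun x z => by
    have h := (cdf μ).measure_Ioc x z; rwa [hmeas] at h
  have hsing : ∀ z : ℝ, μ {z} = ENNReal.ofReal (cdf μ z - Function.leftLim (cdf μ) z) :=
    fun z => by have h := (cdf μ).measure_singleton z; rwa [hmeas] at h
  have hFz : ∀ z : ℝ, (μ {z}).toReal = cdf μ z - Function.leftLim (cdf μ) z := fun z => by
    rw [hsing, ENNReal.toReal_ofReal (sub_nonneg.2 (hmono.leftLim_le le_rfl))]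
  -- the bad set of points with a massless interval just to their left
  set B : Set ℝ := {z | ∃ q : ℚ, (q : ℝ) < z ∧ μ (Ioc (q : ℝ) z) = 0} with hBdef
  have hB : μ B = 0 := by
    have hsub : B ⊆ ⋃ q : ℚ, {z | (q : ℝ) < z ∧ μ (Ioc (q : ℝ) z) = 0} := by
      rintro z ⟨q, h1, h2⟩; exact mem_iUnion.2 ⟨q, h1, h2⟩
    refine measure_mono_null hsub (measure_iUnion_null fun q => ?_)
    set T := {z | (q : ℝ) < z ∧ μ (Ioc (q : ℝ) z) = 0} with hT
    by_cases hmax : ∃ m ∈ T, ∀ z ∈ T, z ≤ m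
    · obtain ⟨m, hm, hmax⟩ := hmax
      refine measure_mono_null (t := Ioc (q : ℝ) m) ?_ hm.2
      intro z hz
      exact ⟨hz.1, hmax z hz⟩
    · push_neg at hmax
      have hsub2 : T ⊆ ⋃ r : ℚ, (Ioc (q : ℝ) (r : ℝ) ∩ {x | μ (Ioc (q : ℝ) (r : ℝ)) = 0}) := by
        intro z hz
        obtain ⟨z', hz', hlt⟩ := hmax z hz
        obtain ⟨r, hr1, hr2⟩ := exists_rat_btwn hlt
        have hr0 : μ (Ioc (q : ℝ) (r : ℝ)) = 0 :=
          measure_mono_null (Ioc_subset_Ioc_right hr2.le) hz'.2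
        exact mem_iUnion.2 ⟨r, ⟨⟨hz.1, hr1.le⟩, hr0⟩⟩
      refine measure_mono_null hsub2 (measure_iUnion_null fun r => ?_)
      by_cases h0 : μ (Ioc (q : ℝ) (r : ℝ)) = 0
      · exact measure_mono_null inter_subset_left h0
      · have : (Ioc (q : ℝ) (r : ℝ) ∩ {x | μ (Ioc (q : ℝ) (r : ℝ)) = 0}) = ∅ := by
          ext x; simp [h0]
        simp [this]
  -- the pointwise statement on the good set
  have key : ∀ v ∈ Ioc (0 : ℝ) 1, ∀ z ∉ B,
      qf μ (Function.leftLim (cdf μ) z + v * (μ {z}).toReal) = z := by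
    intro v hv z hz
    set u := Function.leftLim (cdf μ) z + v * (μ {z}).toReal with hu
    have h0 : 0 ≤ (μ {z}).toReal := ENNReal.toReal_nonneg
    have hzS : u ≤ cdf μ z := by nlinarith [hFz z, hv.2]
    have hlb : ∀ x ∈ {x : ℝ | u ≤ cdf μ x}, z ≤ x := by
      intro x hx
      by_contra hxz
      push_neg at hxz
      have hxlt : cdf μ x < u := by
        rcases eq_or_ne (μ {z}) 0 with hz0 | hz0
        · obtain ⟨q, hq1, hq2⟩ := exists_rat_btwn hxz
          have hq : μ (Ioc (q : ℝ) z) ≠ 0 := fun h => hz ⟨q, hq2, h⟩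
          have hpos : 0 < μ (Ioc x z) :=
            lt_of_lt_of_le (pos_iff_ne_zero.2 hq) (measure_mono (Ioc_subset_Ioc_left hq1.le))
          rw [hIoc x z] at hpos
          have h1 : 0 < cdf μ z - cdf μ x := ENNReal.ofReal_pos.1 hpos
          have ht : (μ {z}).toReal = 0 := by rw [hz0]; simp
          have h2 : u = cdf μ z := by
            have h3 := hFz z
            rw [ht] at h3
            rw [hu, ht, mul_zero, add_zero]
            linarith
          linarith
        · have hpos : 0 < (μ {z}).toReal := ENNReal.toReal_pos hz0 (measure_ne_top μ _)
          have hle : cdf μ x ≤ Function.leftLim (cdf μ) z := hmono.le_leftLim hxz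
          nlinarith [hv.1]
      exact absurd hx (not_le.2 hxlt)
    have hne : z ∈ {x : ℝ | u ≤ cdf μ x} := hzS
    exact le_antisymm (csInf_le ⟨z, hlb⟩ hne) (le_csInf ⟨z, hne⟩ hlb)
  -- null set in the product
  have hnull : ((volume.restrict (Set.Icc (0 : ℝ) 1)).prod μ)
      (((Ioc (0 : ℝ) 1)ᶜ ×ˢ (univ : Set ℝ)) ∪ ((univ : Set ℝ) ×ˢ B)) = 0 := by
    refine measure_union_null ?_ ?_
    · rw [Measure.prod_prod]
      have h1 : (volume.restrict (Set.Icc (0 : ℝ) 1)) ((Ioc (0 : ℝ) 1)ᶜ) = 0 := by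
        rw [Measure.restrict_apply measurableSet_Ioc.compl]
        refine measure_mono_null (fun x hx => ?_) (measure_singleton (0 : ℝ))
        rcases hx with ⟨hx1, hx2⟩
        simp only [mem_compl_iff, mem_Ioc, not_and, not_le] at hx1
        have : x ≤ 0 := by
          by_contra hc; push_neg at hc
          exact absurd (hx1 hc) (not_lt.2 hx2.2)
        simp [le_antisymm this hx2.1]
      rw [h1, zero_mul]
    · rw [Measure.prod_prod, hB, mul_zero]
  rw [ae_iff]
  refine measure_mono_null (fun p hp => ?_) hnull
  by_contra hN
  simp only [mem_union, mem_prod, mem_compl_iff, mem_univ, and_true, true_and, not_or,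
    not_and] at hN
  push_neg at hN
  obtain ⟨h1, h2⟩ := hN
  exact hp (key p.1 h1 p.2 h2)
end

section
/- Let μ be a probability measure on ℝ with finite moment of order ρ ≥ 1, let F be its cdf, f the density of the absolutely continuous part of μ, and A a Borel set with μ_sing(A)=0 and ℝ∖A Lebesgue-null. Then for all 0 < u < w < 1: F^{-1}(w) − F^{-1}(u) = ∫_u^w 1_A(F^{-1}(v))/f(F^{-1}(v)) dv + λ({x : u ≤ F(x) < w, f(x) = 0}), where λ is Lebesgue measure. -/
open MeasureTheory ProbabilityTheory Filter Set Function Topology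
open scoped ENNReal

section aux

variable (μ : Measure ℝ) [IsProbabilityMeasure μ]

lemma qf_set_nonempty {v : ℝ} (hv : v < 1) : {x : ℝ | v ≤ cdf μ x}.Nonempty := by
  have h := (tendsto_cdf_atTop μ).eventually (eventually_ge_nhds hv)
  exact h.exists.imp fun x hx => hx

lemma qf_set_bddBelow {v : ℝ} (hv : 0 < v) : BddBelow {x : ℝ | v ≤ cdf μ x} := by
  obtain ⟨x₀, hx₀⟩ := ((tendsto_cdf_atBot μ).eventually (eventually_lt_nhds hv)).exists
  exact ⟨x₀, fun y hy => le_of_not_gt fun hlt =>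
    absurd hy (not_le.mpr (lt_of_le_of_lt (monotone_cdf μ hlt.le) hx₀))⟩

lemma le_cdf_qf {v : ℝ} (h0 : 0 < v) (h1 : v < 1) : v ≤ cdf μ (qf μ v) := by
  have hne := qf_set_nonempty μ h1
  have htend : Tendsto (cdf μ) (𝓝[>] (qf μ v)) (𝓝 (cdf μ (qf μ v))) :=
    ((cdf μ).right_continuous (qf μ v)).mono_left (nhdsWithin_mono _ Ioi_subset_Ici_self)
  refine ge_of_tendsto htend ?_
  filter_upwards [self_mem_nhdsWithin] with y hy
  obtain ⟨x, hxS, hxy⟩ := exists_lt_of_csInf_lt hne hy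
  exact hxS.trans (monotone_cdf μ hxy.le)

lemma qf_le_iff {v x : ℝ} (h0 : 0 < v) (h1 : v < 1) : qf μ v ≤ x ↔ v ≤ cdf μ x := by
  constructor
  · intro h; exact (le_cdf_qf μ h0 h1).trans (monotone_cdf μ h)
  · intro h; exact csInf_le (qf_set_bddBelow μ h0) h

lemma qf_mono {s t : ℝ} (h0 : 0 < s) (hst : s ≤ t) (h1 : t < 1) : qf μ s ≤ qf μ t :=
  csInf_le_csInf (qf_set_bddBelow μ h0) (qf_set_nonempty μ h1)
    (fun x hx => le_trans hst hx)

lemma leftLim_cdf_qf_le {v : ℝ} (h0 : 0 < v) (h1 : v < 1) :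
    leftLim (cdf μ) (qf μ v) ≤ v := by
  refine le_of_tendsto ((monotone_cdf μ).tendsto_leftLim (qf μ v)) ?_
  filter_upwards [self_mem_nhdsWithin] with x hx
  by_contra hlt
  exact absurd ((qf_le_iff μ h0 h1).mpr (le_of_not_ge hlt)) (not_le.mpr hx)

lemma notMem_of_atom {f : ℝ → ℝ} {A : Set ℝ}
    (hdec : μ = μ.singularPart volume + volume.withDensity (fun x => ENNReal.ofReal (f x)))
    (hsing : μ.singularPart volume A = 0) {x : ℝ} (hx : μ {x} ≠ 0) : x ∉ A := by
  intro hxA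
  apply hx
  have h2 : (volume.withDensity (fun x => ENNReal.ofReal (f x))) {x} = 0 := by
    rw [withDensity_apply _ (measurableSet_singleton x),
      Measure.restrict_eq_zero.mpr (by simp), lintegral_zero_measure]
  have h1 : μ.singularPart volume {x} = 0 :=
    le_antisymm (le_trans (measure_mono (singleton_subset_iff.mpr hxA)) hsing.le) zero_le
  rw [hdec, Measure.add_apply, h1, h2, add_zero]

lemma measure_singleton_eq {x : ℝ} :
    μ {x} = ENNReal.ofReal (cdf μ x - leftLim (cdf μ) x) := by
  have h := (cdf μ).measure_singleton x
  rwa [measure_cdf] at h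

lemma measure_Ioc_eq {x y : ℝ} :
    μ (Ioc x y) = ENNReal.ofReal (cdf μ y - cdf μ x) := by
  have h := (cdf μ).measure_Ioc x y
  rwa [measure_cdf] at h

lemma measure_Ioo_eq {x y : ℝ} :
    μ (Ioo x y) = ENNReal.ofReal (leftLim (cdf μ) y - cdf μ x) := by
  have h := (cdf μ).measure_Ioo (a := x) (b := y)
  rwa [measure_cdf] at h

end aux

theorem stmt8 (μ : Measure ℝ) [IsProbabilityMeasure μ] (ρ : ℝ) (hρ : 1 ≤ ρ)
    (hmom : Integrable (fun x : ℝ => |x| ^ ρ) μ)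
    (f : ℝ → ℝ) (hf0 : ∀ x, 0 ≤ f x) (hfmeas : Measurable f)
    (hdec : μ = μ.singularPart volume
      + volume.withDensity (fun x => ENNReal.ofReal (f x)))
    (A : Set ℝ) (hA : MeasurableSet A) (hsing : μ.singularPart volume A = 0)
    (hAc : volume Aᶜ = 0) (hfA : ∀ x ∉ A, f x = 1)
    (u w : ℝ) (hu : 0 < u) (huw : u < w) (hw : w < 1) :
    qf μ w - qf μ u =
      (∫ v in u..w, Set.indicator A (fun y => (f y)⁻¹) (qf μ v))
      + (volume {x : ℝ | u ≤ cdf μ x ∧ cdf μ x < w ∧ f x = 0}).toReal := by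
  clear hρ hmom
  set a := qf μ u with ha
  set b := qf μ w with hb
  have hu1 : u < 1 := huw.trans hw
  have hw0 : 0 < w := hu.trans huw
  have hab : a ≤ b := qf_mono μ hu huw.le hw
  set G : ℝ → ℝ≥0∞ := A.indicator (fun y => ENNReal.ofReal (f y)⁻¹) with hG
  have hGmeas : Measurable G := (hfmeas.inv.ennreal_ofReal).indicator hA
  have hGatom : ∀ x : ℝ, μ {x} ≠ 0 → G x = 0 := fun x hx =>
    indicator_of_notMem (notMem_of_atom μ hdec hsing hx) _
  have hFa : u ≤ cdf μ a := le_cdf_qf μ hu hu1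
  have hFb : w ≤ cdf μ b := le_cdf_qf μ hw0 hw
  have hLa : leftLim (cdf μ) a ≤ u := leftLim_cdf_qf_le μ hu hu1
  have hLb : leftLim (cdf μ) b ≤ w := leftLim_cdf_qf_le μ hw0 hw
  have hset : {x : ℝ | u ≤ cdf μ x ∧ cdf μ x < w ∧ f x = 0} = Ico a b ∩ {x | f x = 0} := by
    ext x
    simp only [mem_setOf_eq, mem_inter_iff, mem_Ico]
    constructor
    · rintro ⟨h1, h2, h3⟩
      refine ⟨⟨(qf_le_iff μ hu hu1).mpr h1, ?_⟩, h3⟩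
      by_contra hbx
      exact absurd ((qf_le_iff μ hw0 hw).mp (le_of_not_gt hbx)) (not_le.mpr h2)
    · rintro ⟨⟨h1, h2⟩, h3⟩
      refine ⟨(qf_le_iff μ hu hu1).mp h1, ?_, h3⟩
      by_contra h4
      exact absurd ((qf_le_iff μ hw0 hw).mpr (le_of_not_gt h4)) (not_le.mpr h2)
  rcases eq_or_lt_of_le hab with habe | hablt
  · -- degenerate case: a = b, a single atom covers [u, w]
    have hwa : w ≤ cdf μ a := habe ▸ hFb
    have hmua : μ {a} ≠ 0 := by
      rw [measure_singleton_eq μ]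
      have : (0 : ℝ≥0∞) < ENNReal.ofReal (cdf μ a - leftLim (cdf μ) a) :=
        ENNReal.ofReal_pos.mpr (by linarith)
      exact this.ne'
    have haA : a ∉ A := notMem_of_atom μ hdec hsing hmua
    have hint : (∫ v in u..w, Set.indicator A (fun y => (f y)⁻¹) (qf μ v)) = 0 := by
      rw [intervalIntegral.integral_of_le huw.le]
      rw [setIntegral_congr_fun measurableSet_Ioc
        (g := fun _ => (0:ℝ)) (fun v hv => ?_), integral_zero]
      have h1 : a ≤ qf μ v := qf_mono μ hu hv.1.le (lt_of_le_of_lt hv.2 hw)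
      have h2 : qf μ v ≤ a := habe ▸ qf_mono μ (hu.trans hv.1) hv.2 hw
      rw [le_antisymm h2 h1]
      exact indicator_of_notMem haA _
    rw [hint, hset, ← habe, Ico_self, empty_inter, measure_empty]
    simp [← habe]
  · -- main case : a < b
    set u₁ := u / 2 with hu₁def
    set w₁ := (w + 1) / 2 with hw₁def
    have hu₁0 : 0 < u₁ := by positivity
    have hu₁u : u₁ < u := by rw [hu₁def]; linarith
    have hww₁ : w < w₁ := by rw [hw₁def]; linarith
    have hw₁1 : w₁ < 1 := by rw [hw₁def]; linarith
    have hu₁w₁ : u₁ ≤ w₁ := by linarith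
    set M : ℝ → ℝ := fun v => qf μ (max u₁ (min v w₁)) with hM
    have hMQ : ∀ v, u₁ ≤ v → v ≤ w₁ → M v = qf μ v := by
      intro v h1 h2
      rw [hM]
      simp only [min_eq_left h2, max_eq_right h1]
    have hclamp0 : ∀ v : ℝ, 0 < max u₁ (min v w₁) :=
      fun v => lt_of_lt_of_le hu₁0 (le_max_left _ _)
    have hclamp1 : ∀ v : ℝ, max u₁ (min v w₁) < 1 :=
      fun v => lt_of_le_of_lt (max_le hu₁w₁ (min_le_right _ _)) hw₁1
    have hMmono : Monotone M := fun v v' hvv' =>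
      qf_mono μ (hclamp0 v) (max_le_max le_rfl (min_le_min hvv' le_rfl)) (hclamp1 v')
    have hMmeas : Measurable M := hMmono.measurable
    have gcM : ∀ v x : ℝ, u₁ ≤ v → v ≤ w₁ → (M v ≤ x ↔ v ≤ cdf μ x) := by
      intro v x h1 h2
      rw [hMQ v h1 h2]
      exact qf_le_iff μ (lt_of_lt_of_le hu₁0 h1) (lt_of_le_of_lt h2 hw₁1)
    set ν := Measure.map M (volume.restrict (Ioc u w)) with hν
    set κ := μ.restrict (Ioo a b)
        + (ENNReal.ofReal (cdf μ a - u)) • Measure.dirac a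
        + (ENNReal.ofReal (w - leftLim (cdf μ) b)) • Measure.dirac b with hκ
    haveI hfinν : IsFiniteMeasure ν := by
      constructor
      rw [hν, Measure.map_apply hMmeas MeasurableSet.univ, preimage_univ,
        Measure.restrict_apply_univ, Real.volume_Ioc]
      exact ENNReal.ofReal_lt_top
    have hνκ : ν = κ := by
      refine Measure.ext_of_Iic ν κ fun x => ?_
      have hLHS : ν (Iic x) = ENNReal.ofReal (min w (cdf μ x) - u) := by
        rw [hν, Measure.map_apply hMmeas measurableSet_Iic,
          Measure.restrict_apply (hMmeas measurableSet_Iic)]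
        have hpre : (M ⁻¹' Iic x) ∩ Ioc u w = Ioc u (min w (cdf μ x)) := by
          ext v
          simp only [mem_inter_iff, mem_preimage, mem_Iic, mem_Ioc, le_min_iff]
          constructor
          · rintro ⟨h1, h2, h3⟩
            exact ⟨h2, h3, (gcM v x (by linarith) (by linarith)).mp h1⟩
          · rintro ⟨h1, h2, h3⟩
            exact ⟨(gcM v x (by linarith) (by linarith)).mpr h3, h1, h2⟩
        rw [hpre, Real.volume_Ioc]
      have hdir : ∀ (y : ℝ) (c : ℝ≥0∞),
          (c • Measure.dirac y) (Iic x) = if y ≤ x then c else 0 := by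
        intro y c
        rw [Measure.smul_apply, Measure.dirac_apply' _ measurableSet_Iic]
        by_cases h : y ≤ x <;> simp [Set.indicator_apply, h]
      have hRHS : κ (Iic x) = μ (Iic x ∩ Ioo a b)
          + (if a ≤ x then ENNReal.ofReal (cdf μ a - u) else 0)
          + (if b ≤ x then ENNReal.ofReal (w - leftLim (cdf μ) b) else 0) := by
        rw [hκ]
        simp only [Measure.coe_add, Pi.add_apply, hdir,
          Measure.restrict_apply measurableSet_Iic]
      rw [hLHS, hRHS]
      rcases lt_or_ge x a with hxa | hax
      · have hFx : cdf μ x < u := by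
          by_contra h
          exact absurd ((qf_le_iff μ hu hu1).mpr (le_of_not_gt h)) (not_le.mpr hxa)
        have h1 : Iic x ∩ Ioo a b = ∅ := by
          ext v
          simp only [mem_inter_iff, mem_Iic, mem_Ioo, mem_empty_iff_false, iff_false]
          rintro ⟨hv1, hv2, hv3⟩; linarith
        rw [h1, measure_empty, if_neg (not_le.mpr hxa),
          if_neg (not_le.mpr (lt_of_lt_of_le hxa hab)),
          min_eq_right (by linarith : cdf μ x ≤ w),
          ENNReal.ofReal_eq_zero.mpr (by linarith : cdf μ x - u ≤ 0)]
        simp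
      · rcases lt_or_ge x b with hxb | hbx
        · have hFxu : u ≤ cdf μ x := (qf_le_iff μ hu hu1).mp hax
          have hFxw : cdf μ x < w := by
            by_contra h
            exact absurd ((qf_le_iff μ hw0 hw).mpr (le_of_not_gt h)) (not_le.mpr hxb)
          have h1 : Iic x ∩ Ioo a b = Ioc a x := by
            ext v
            simp only [mem_inter_iff, mem_Iic, mem_Ioo, mem_Ioc]
            constructor
            · rintro ⟨hv1, hv2, hv3⟩; exact ⟨hv2, hv1⟩
            · rintro ⟨hv1, hv2⟩; exact ⟨hv2, hv1, lt_of_le_of_lt hv2 hxb⟩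
          rw [h1, measure_Ioc_eq μ, if_pos hax, if_neg (not_le.mpr hxb),
            min_eq_right hFxw.le, add_zero,
            ← ENNReal.ofReal_add (by linarith [monotone_cdf μ hax] : (0:ℝ) ≤ cdf μ x - cdf μ a)
              (by linarith : (0:ℝ) ≤ cdf μ a - u)]
          congr 1
          ring
        · have hFxw : w ≤ cdf μ x := (qf_le_iff μ hw0 hw).mp hbx
          have h1 : Iic x ∩ Ioo a b = Ioo a b := by
            refine inter_eq_right.mpr fun v hv => ?_
            exact le_trans (le_of_lt hv.2) hbx
          have hFaLb : cdf μ a ≤ leftLim (cdf μ) b := (monotone_cdf μ).le_leftLim hablt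
          rw [h1, measure_Ioo_eq μ, if_pos (hab.trans hbx), if_pos hbx,
            min_eq_left hFxw]
          rw [← ENNReal.ofReal_add (by linarith : (0:ℝ) ≤ leftLim (cdf μ) b - cdf μ a)
              (by linarith : (0:ℝ) ≤ cdf μ a - u),
            ← ENNReal.ofReal_add (by linarith : (0:ℝ) ≤ leftLim (cdf μ) b - cdf μ a + (cdf μ a - u))
              (by linarith : (0:ℝ) ≤ w - leftLim (cdf μ) b)]
          congr 1
          ring
    -- Step 1: interval integral as lintegral against ν
    have hofReal : ∀ x : ℝ, ENNReal.ofReal (A.indicator (fun y => (f y)⁻¹) x) = G x := by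
      intro x
      by_cases hx : x ∈ A <;>
        simp [hG, Set.indicator_of_mem, Set.indicator_of_notMem, hx]
    have hstep1 : (∫ v in u..w, Set.indicator A (fun y => (f y)⁻¹) (qf μ v))
        = (∫⁻ x, G x ∂ν).toReal := by
      rw [intervalIntegral.integral_of_le huw.le]
      rw [setIntegral_congr_fun measurableSet_Ioc
        (g := fun v => A.indicator (fun y => (f y)⁻¹) (M v))
        (fun v hv => by rw [← hMQ v (by linarith [hv.1]) (by linarith [hv.2])])]
      rw [integral_eq_lintegral_of_nonneg_ae
        (Filter.Eventually.of_forall fun v =>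
          Set.indicator_nonneg (fun y _ => inv_nonneg.mpr (hf0 y)) _)
        (((hfmeas.inv.indicator hA).comp hMmeas).aestronglyMeasurable)]
      congr 1
      rw [hν, lintegral_map hGmeas hMmeas]
      exact lintegral_congr fun v => hofReal (M v)
    -- Step 2: the dirac contributions vanish
    have hta : ENNReal.ofReal (cdf μ a - u) * G a = 0 := by
      rcases eq_or_lt_of_le hFa with h | h
      · rw [← h, sub_self, ENNReal.ofReal_zero, zero_mul]
      · have hmua : μ {a} ≠ 0 := by
          rw [measure_singleton_eq μ]
          exact (ENNReal.ofReal_pos.mpr (by linarith)).ne'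
        rw [hGatom a hmua, mul_zero]
    have htb : ENNReal.ofReal (w - leftLim (cdf μ) b) * G b = 0 := by
      rcases eq_or_lt_of_le hLb with h | h
      · rw [h, sub_self, ENNReal.ofReal_zero, zero_mul]
      · have hmub : μ {b} ≠ 0 := by
          rw [measure_singleton_eq μ]
          exact (ENNReal.ofReal_pos.mpr (by linarith)).ne'
        rw [hGatom b hmub, mul_zero]
    have hκint : ∫⁻ x, G x ∂κ = ∫⁻ x in Ioo a b, G x ∂μ := by
      rw [hκ, lintegral_add_measure, lintegral_add_measure, lintegral_smul_measure,
        lintegral_smul_measure, lintegral_dirac' _ hGmeas, lintegral_dirac' _ hGmeas,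
        smul_eq_mul, smul_eq_mul, hta, htb, add_zero, add_zero]
    -- Step 3: compute the μ-integral via the decomposition
    have hfne : MeasurableSet {x : ℝ | f x ≠ 0} :=
      (hfmeas (measurableSet_singleton 0)).compl
    have hmain : ∫⁻ x in Ioo a b, G x ∂μ
        = volume ((A ∩ {x | f x ≠ 0}) ∩ Ioo a b) := by
      conv_lhs => rw [hdec]
      rw [Measure.restrict_add, lintegral_add_measure]
      have hsing0 : ∫⁻ x in Ioo a b, G x ∂(μ.singularPart volume) = 0 := by
        have h0 : ((μ.singularPart volume).restrict (Ioo a b)) {x | G x ≠ 0} = 0 := by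
          refine le_antisymm (le_trans (Measure.restrict_le_self _) ?_) zero_le
          refine le_trans (measure_mono fun x hx => ?_) hsing.le
          by_contra hxA
          exact hx (Set.indicator_of_notMem hxA _)
        exact (lintegral_eq_zero_iff hGmeas).mpr (ae_iff.mpr (by simpa using h0))
      rw [hsing0, zero_add, restrict_withDensity measurableSet_Ioo,
        lintegral_withDensity_eq_lintegral_mul _ hfmeas.ennreal_ofReal hGmeas]
      have hpt : (fun x => ((fun x => ENNReal.ofReal (f x)) * G) x)
          = (A ∩ {x | f x ≠ 0}).indicator 1 := by
        funext x
        simp only [Pi.mul_apply]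
        by_cases hxA : x ∈ A
        · by_cases hfx : f x = 0
          · simp [hG, Set.indicator_of_mem hxA, hfx, Set.indicator_apply, hxA]
          · have h1 : ENNReal.ofReal (f x) * ENNReal.ofReal (f x)⁻¹ = 1 := by
              rw [← ENNReal.ofReal_mul (hf0 x), mul_inv_cancel₀ hfx, ENNReal.ofReal_one]
            simp [hG, Set.indicator_of_mem hxA, h1, Set.indicator_apply, hxA, hfx]
        · simp [hG, Set.indicator_of_notMem hxA, Set.indicator_apply, hxA]
      rw [hpt, lintegral_indicator (hA.inter hfne), Measure.restrict_restrict (hA.inter hfne)]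
      simp [Measure.restrict_apply (hA.inter hfne)]
    have hdrop : volume ((A ∩ {x | f x ≠ 0}) ∩ Ioo a b) = volume (Ioo a b ∩ {x | f x ≠ 0}) := by
      apply le_antisymm
      · exact measure_mono fun x hx => ⟨hx.2, hx.1.2⟩
      · calc volume (Ioo a b ∩ {x | f x ≠ 0})
            ≤ volume (((A ∩ {x | f x ≠ 0}) ∩ Ioo a b) ∪ Aᶜ) := by
              refine measure_mono fun x hx => ?_
              by_cases hxA : x ∈ A
              · exact Or.inl ⟨⟨hxA, hx.2⟩, hx.1⟩
              · exact Or.inr hxA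
          _ ≤ volume ((A ∩ {x | f x ≠ 0}) ∩ Ioo a b) + volume Aᶜ := measure_union_le _ _
          _ = volume ((A ∩ {x | f x ≠ 0}) ∩ Ioo a b) := by rw [hAc, add_zero]
    have hIooIco : volume (Ioo a b ∩ {x | f x ≠ 0}) = volume (Ico a b ∩ {x | f x ≠ 0}) := by
      apply le_antisymm
      · exact measure_mono (inter_subset_inter_left _ Ioo_subset_Ico_self)
      · calc volume (Ico a b ∩ {x | f x ≠ 0})
            ≤ volume ((Ioo a b ∩ {x | f x ≠ 0}) ∪ {a}) := by
              refine measure_mono fun x hx => ?_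
              rcases eq_or_lt_of_le hx.1.1 with h | h
              · exact Or.inr (by simp [← h])
              · exact Or.inl ⟨⟨h, hx.1.2⟩, hx.2⟩
          _ ≤ volume (Ioo a b ∩ {x | f x ≠ 0}) + volume {a} := measure_union_le _ _
          _ = volume (Ioo a b ∩ {x | f x ≠ 0}) := by rw [Real.volume_singleton, add_zero]
    have htotal : ∫⁻ x, G x ∂ν = volume (Ico a b ∩ {x | f x ≠ 0}) := by
      rw [hνκ, hκint, hmain, hdrop, hIooIco]
    -- Step 4: final arithmetic
    set m0 := volume (Ico a b ∩ {x | f x = 0}) with hm0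
    set m1 := volume (Ico a b ∩ {x | f x ≠ 0}) with hm1
    have hsplit : m0 + m1 = ENNReal.ofReal (b - a) := by
      have hdiff : Ico a b \ {x : ℝ | f x = 0} = Ico a b ∩ {x | f x ≠ 0} := rfl
      have h := measure_inter_add_diff (μ := volume) (t := {x : ℝ | f x = 0})
        (Ico a b) (hfmeas (measurableSet_singleton 0))
      rw [hdiff] at h
      rw [hm0, hm1, h, Real.volume_Ico]
    have hfin : m0 + m1 ≠ ⊤ := by rw [hsplit]; exact ENNReal.ofReal_ne_top
    have hm0fin : m0 ≠ ⊤ := (ENNReal.add_ne_top.mp hfin).1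
    have hm1fin : m1 ≠ ⊤ := (ENNReal.add_ne_top.mp hfin).2
    rw [hset, hstep1, htotal, ← hm0]
    have hba : (0 : ℝ) ≤ b - a := by linarith
    calc b - a = (ENNReal.ofReal (b - a)).toReal := (ENNReal.toReal_ofReal hba).symm
      _ = (m0 + m1).toReal := by rw [hsplit]
      _ = m0.toReal + m1.toReal := ENNReal.toReal_add hm0fin hm1fin
      _ = m1.toReal + m0.toReal := by ring
end

section
/- Let μ be a probability measure on ℝ with cdf F and quantile function F^{-1}, and β > 0. Then sup_{x≥0} x^β (F(−x) + 1 − F(x)) < ∞ if and only if sup_{u∈(0,1/2]} u^{1/β}(F^{-1}(1−u) − F^{-1}(u)) < ∞; moreover sup_{u∈(0,1/2]} u^{1/β}(F^{-1}(1−u) − F^{-1}(u)) ≤ (sup_{x≥0} x^β F(−x))^{1/β} + (sup_{x≥0} x^β (1−F(x)))^{1/β}. -/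
open MeasureTheory ProbabilityTheory Filter Set

lemma qf_nonempty (μ : Measure ℝ) [IsProbabilityMeasure μ] {v : ℝ} (hv : v < 1) :
    {x : ℝ | v ≤ cdf μ x}.Nonempty := by
  have h := (tendsto_cdf_atTop μ).eventually_const_le hv
  exact h.exists

lemma qf_bddBelow (μ : Measure ℝ) [IsProbabilityMeasure μ] {u : ℝ} (hu : 0 < u) :
    BddBelow {x : ℝ | u ≤ cdf μ x} := by
  have h := (tendsto_cdf_atBot μ).eventually_lt_const hu
  obtain ⟨y, hy⟩ := Filter.eventually_atBot.mp h
  refine ⟨y, fun x hx => ?_⟩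
  by_contra hxy
  push_neg at hxy
  exact absurd hx (not_le.mpr (hy x hxy.le))

lemma qf_le (μ : Measure ℝ) [IsProbabilityMeasure μ] {u x : ℝ} (hu : 0 < u)
    (h : u ≤ cdf μ x) : qf μ u ≤ x :=
  csInf_le (qf_bddBelow μ hu) h

lemma le_qf (μ : Measure ℝ) [IsProbabilityMeasure μ] {u y : ℝ} (hu : u < 1)
    (h : ∀ x, u ≤ cdf μ x → y ≤ x) : y ≤ qf μ u :=
  le_csInf (qf_nonempty μ hu) h

lemma qf_mono_s12 (μ : Measure ℝ) [IsProbabilityMeasure μ] {u v : ℝ} (hu : 0 < u)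
    (huv : u ≤ v) (hv : v < 1) : qf μ u ≤ qf μ v :=
  csInf_le_csInf (qf_bddBelow μ hu) (qf_nonempty μ hv)
    (fun x hx => le_trans huv hx)

/-- Key quantitative bound (second part of the statement). -/
lemma key_bound (μ : Measure ℝ) [IsProbabilityMeasure μ] (β : ℝ) (hβ : 0 < β)
    (hA : BddAbove ((fun x : ℝ => x ^ β * cdf μ (-x)) '' Set.Ici 0))
    (hB : BddAbove ((fun x : ℝ => x ^ β * (1 - cdf μ x)) '' Set.Ici 0)) :
    ∀ u ∈ Set.Ioc (0 : ℝ) (1 / 2),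
      u ^ (1 / β) * (qf μ (1 - u) - qf μ u) ≤
        (sSup ((fun x : ℝ => x ^ β * cdf μ (-x)) '' Set.Ici 0)) ^ (1 / β)
        + (sSup ((fun x : ℝ => x ^ β * (1 - cdf μ x)) '' Set.Ici 0)) ^ (1 / β) := by
  set A := sSup ((fun x : ℝ => x ^ β * cdf μ (-x)) '' Set.Ici 0) with hAdef
  set B := sSup ((fun x : ℝ => x ^ β * (1 - cdf μ x)) '' Set.Ici 0) with hBdef
  have h0A : (0 : ℝ) ≤ A := by
    refine le_csSup hA ⟨0, Set.mem_Ici.mpr le_rfl, ?_⟩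
    simp [Real.zero_rpow hβ.ne']
  have h0B : (0 : ℝ) ≤ B := by
    refine le_csSup hB ⟨0, Set.mem_Ici.mpr le_rfl, ?_⟩
    simp [Real.zero_rpow hβ.ne']
  intro u hu
  obtain ⟨hu0, hu2⟩ := hu
  have hu1 : u < 1 := lt_of_le_of_lt hu2 (by norm_num)
  have hupow : (0 : ℝ) < u ^ (1 / β) := Real.rpow_pos_of_pos hu0 _
  -- upper bound for qf μ (1 - u)
  have hq1 : qf μ (1 - u) ≤ (B / u) ^ (1 / β) := by
    set x := (B / u) ^ (1 / β) with hxdef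
    have hx0 : 0 ≤ x := Real.rpow_nonneg (div_nonneg h0B hu0.le) _
    have hxβ : x ^ β = B / u := by
      rw [hxdef, one_div, Real.rpow_inv_rpow (div_nonneg h0B hu0.le) hβ.ne']
    have hsub : Set.Ioi x ⊆ {z : ℝ | 1 - u ≤ cdf μ z} := by
      intro y hy
      have hy0 : 0 < y := lt_of_le_of_lt hx0 hy
      have hyβ : x ^ β < y ^ β := Real.rpow_lt_rpow hx0 hy hβ
      have hyB : y ^ β * (1 - cdf μ y) ≤ B := le_csSup hB ⟨y, hy0.le, rfl⟩
      have hyβ0 : 0 < y ^ β := Real.rpow_pos_of_pos hy0 _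
      have : y ^ β * (1 - cdf μ y) ≤ y ^ β * u := by
        calc y ^ β * (1 - cdf μ y) ≤ B := hyB
          _ = (B / u) * u := by field_simp
          _ = x ^ β * u := by rw [hxβ]
          _ ≤ y ^ β * u := by nlinarith
      have h1 : 1 - cdf μ y ≤ u := le_of_mul_le_mul_left
        (by linarith [this]) hyβ0
      simp only [Set.mem_setOf_eq]; linarith
    have : qf μ (1 - u) ≤ sInf (Set.Ioi x) :=
      csInf_le_csInf (qf_bddBelow μ (by linarith)) (Set.nonempty_Ioi) hsub
    rwa [csInf_Ioi] at this
  -- lower bound for qf μ u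
  have hq2 : -((A / u) ^ (1 / β)) ≤ qf μ u := by
    set x := (A / u) ^ (1 / β) with hxdef
    have hx0 : 0 ≤ x := Real.rpow_nonneg (div_nonneg h0A hu0.le) _
    have hxβ : x ^ β = A / u := by
      rw [hxdef, one_div, Real.rpow_inv_rpow (div_nonneg h0A hu0.le) hβ.ne']
    refine le_qf μ hu1 (fun y hy => ?_)
    by_contra hxy
    push_neg at hxy
    have hy0 : x < -y := by linarith
    have hny0 : 0 < -y := lt_of_le_of_lt hx0 hy0
    have hyβ : x ^ β < (-y) ^ β := Real.rpow_lt_rpow hx0 hy0 hβ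
    have hyA : (-y) ^ β * cdf μ (-(-y)) ≤ A := le_csSup hA ⟨-y, hny0.le, rfl⟩
    rw [neg_neg] at hyA
    have hyβ0 : 0 < (-y) ^ β := Real.rpow_pos_of_pos hny0 _
    have hAx : A = x ^ β * u := by rw [hxβ]; field_simp
    have : cdf μ y < u := by
      have h1 : (-y) ^ β * cdf μ y < (-y) ^ β * u := by nlinarith
      exact lt_of_mul_lt_mul_left h1 hyβ0.le
    linarith
  have hdiff : qf μ (1 - u) - qf μ u ≤ (B / u) ^ (1 / β) + (A / u) ^ (1 / β) := by
    linarith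
  calc u ^ (1 / β) * (qf μ (1 - u) - qf μ u)
      ≤ u ^ (1 / β) * ((B / u) ^ (1 / β) + (A / u) ^ (1 / β)) :=
        mul_le_mul_of_nonneg_left hdiff hupow.le
    _ = A ^ (1 / β) + B ^ (1 / β) := by
        rw [Real.div_rpow h0B hu0.le, Real.div_rpow h0A hu0.le]
        field_simp
        ring

theorem stmt12 (μ : Measure ℝ) [IsProbabilityMeasure μ] (β : ℝ) (hβ : 0 < β) :
    ((∃ C : ℝ, ∀ x : ℝ, 0 ≤ x → x ^ β * (cdf μ (-x) + 1 - cdf μ x) ≤ C) ↔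
      (∃ C : ℝ, ∀ u ∈ Set.Ioc (0 : ℝ) (1 / 2),
        u ^ (1 / β) * (qf μ (1 - u) - qf μ u) ≤ C)) ∧
    (BddAbove ((fun x : ℝ => x ^ β * cdf μ (-x)) '' Set.Ici 0) →
      BddAbove ((fun x : ℝ => x ^ β * (1 - cdf μ x)) '' Set.Ici 0) →
      ∀ u ∈ Set.Ioc (0 : ℝ) (1 / 2),
        u ^ (1 / β) * (qf μ (1 - u) - qf μ u) ≤
          (sSup ((fun x : ℝ => x ^ β * cdf μ (-x)) '' Set.Ici 0)) ^ (1 / β)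
          + (sSup ((fun x : ℝ => x ^ β * (1 - cdf μ x)) '' Set.Ici 0)) ^ (1 / β)) := by
  constructor
  · constructor
    · -- forward direction
      rintro ⟨C, hC⟩
      have hA : BddAbove ((fun x : ℝ => x ^ β * cdf μ (-x)) '' Set.Ici 0) := by
        refine ⟨C, ?_⟩
        rintro y ⟨x, hx, rfl⟩
        have h1 := hC x hx
        have h2 : 0 ≤ (1 : ℝ) - cdf μ x := by linarith [cdf_le_one μ x]
        have h3 : 0 ≤ x ^ β := Real.rpow_nonneg hx _
        show x ^ β * cdf μ (-x) ≤ C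
        nlinarith
      have hB : BddAbove ((fun x : ℝ => x ^ β * (1 - cdf μ x)) '' Set.Ici 0) := by
        refine ⟨C, ?_⟩
        rintro y ⟨x, hx, rfl⟩
        have h1 := hC x hx
        have h2 : 0 ≤ cdf μ (-x) := cdf_nonneg μ (-x)
        have h3 : 0 ≤ x ^ β := Real.rpow_nonneg hx _
        show x ^ β * (1 - cdf μ x) ≤ C
        nlinarith
      exact ⟨_, key_bound μ β hβ hA hB⟩
    · -- backward direction
      rintro ⟨C, hC⟩
      set m := qf μ (1 / 2) with hm
      have hC0 : 0 ≤ C := by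
        have h := hC (1 / 2) ⟨by norm_num, le_refl _⟩
        norm_num at h
        linarith
      set D := |m| + C * 2 ^ (1 / β) with hDdef
      have hD0 : 0 ≤ D := by
        have : (0:ℝ) ≤ C * 2 ^ (1 / β) :=
          mul_nonneg hC0 (Real.rpow_nonneg (by norm_num) _)
        positivity
      -- Right tail bound
      have hright : ∀ x : ℝ, 0 ≤ x → x ^ β * (1 - cdf μ x) ≤ D ^ β := by
        intro x hx
        rcases le_or_gt (1 - cdf μ x) 0 with hq | hq
        · have : x ^ β * (1 - cdf μ x) ≤ 0 :=
            mul_nonpos_of_nonneg_of_nonpos (Real.rpow_nonneg hx _) hq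
          exact le_trans this (Real.rpow_nonneg hD0 _)
        · set q := 1 - cdf μ x with hqdef
          have hq1 : q ≤ 1 := by
            have := cdf_nonneg μ x; simp only [hqdef]; linarith
          set u := q / 2 with hudef
          have hu0 : 0 < u := by positivity
          have hu2 : u ≤ 1 / 2 := by simp only [hudef]; linarith
          have hu1 : u < 1 := by linarith
          have h1 : x ≤ qf μ (1 - u) := by
            refine le_qf μ (by linarith) (fun y hy => ?_)
            by_contra hxy
            push_neg at hxy
            have : cdf μ y ≤ cdf μ x := (cdf μ).mono hxy.le
            have : (1:ℝ) - u ≤ 1 - q := by linarith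
            simp only [hudef] at this; linarith
          have h2 : qf μ u ≤ m := qf_mono_s12 μ hu0 hu2 (by norm_num)
          have hkey := hC u ⟨hu0, hu2⟩
          have hup : (0:ℝ) < u ^ (1 / β) := Real.rpow_pos_of_pos hu0 _
          have hxm : u ^ (1 / β) * (x - m) ≤ C := by
            have : x - m ≤ qf μ (1 - u) - qf μ u := by linarith
            calc u ^ (1 / β) * (x - m) ≤ u ^ (1 / β) * (qf μ (1 - u) - qf μ u) :=
                  mul_le_mul_of_nonneg_left this hup.le
              _ ≤ C := hkey
          have hqp : (0:ℝ) < q ^ (1 / β) := Real.rpow_pos_of_pos hq _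
          have hq1p : q ^ (1 / β) ≤ 1 :=
            Real.rpow_le_one hq.le hq1 (by positivity)
          have huq : u ^ (1 / β) = q ^ (1 / β) / 2 ^ (1 / β) := by
            rw [hudef, Real.div_rpow hq.le (by norm_num)]
          have h2p : (0:ℝ) < (2:ℝ) ^ (1 / β) := Real.rpow_pos_of_pos (by norm_num) _
          have hxD : x ≤ D / q ^ (1 / β) := by
            have hxm2 : x - m ≤ C / u ^ (1 / β) := by
              rw [le_div_iff₀ hup]; linarith [hxm]
            have : C / u ^ (1 / β) = C * 2 ^ (1 / β) / q ^ (1 / β) := by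
              rw [huq]; field_simp
            rw [this] at hxm2
            have hmabs : m ≤ |m| / q ^ (1 / β) := by
              calc m ≤ |m| := le_abs_self m
                _ ≤ |m| / q ^ (1 / β) := by
                    rw [le_div_iff₀ hqp]
                    nlinarith [abs_nonneg m]
            calc x = (x - m) + m := by ring
              _ ≤ C * 2 ^ (1 / β) / q ^ (1 / β) + |m| / q ^ (1 / β) := by linarith
              _ = D / q ^ (1 / β) := by rw [hDdef]; ring
          have hxβ : x ^ β ≤ D ^ β / q := by
            have := Real.rpow_le_rpow hx hxD hβ.le
            rwa [Real.div_rpow hD0 hqp.le, one_div,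
              Real.rpow_inv_rpow hq.le hβ.ne'] at this
          rw [le_div_iff₀ hq] at hxβ
          exact hxβ
      -- Left tail bound
      have hleft : ∀ x : ℝ, 0 ≤ x → x ^ β * cdf μ (-x) ≤ D ^ β := by
        intro x hx
        rcases le_or_gt (cdf μ (-x)) 0 with hp | hp
        · have : x ^ β * cdf μ (-x) ≤ 0 :=
            mul_nonpos_of_nonneg_of_nonpos (Real.rpow_nonneg hx _) hp
          exact le_trans this (Real.rpow_nonneg hD0 _)
        · set p := cdf μ (-x) with hpdef
          have hp1 : p ≤ 1 := cdf_le_one μ (-x)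
          set u := p / 2 with hudef
          have hu0 : 0 < u := by positivity
          have hu2 : u ≤ 1 / 2 := by simp only [hudef]; linarith
          have h1 : qf μ u ≤ -x := qf_le μ hu0 (by simp only [hudef, ← hpdef]; linarith)
          have h2 : m ≤ qf μ (1 - u) := qf_mono_s12 μ (by norm_num) (by linarith) (by linarith)
          have hkey := hC u ⟨hu0, hu2⟩
          have hup : (0:ℝ) < u ^ (1 / β) := Real.rpow_pos_of_pos hu0 _
          have hxm : u ^ (1 / β) * (x + m) ≤ C := by
            have : x + m ≤ qf μ (1 - u) - qf μ u := by linarith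
            calc u ^ (1 / β) * (x + m) ≤ u ^ (1 / β) * (qf μ (1 - u) - qf μ u) :=
                  mul_le_mul_of_nonneg_left this hup.le
              _ ≤ C := hkey
          have hqp : (0:ℝ) < p ^ (1 / β) := Real.rpow_pos_of_pos hp _
          have hq1p : p ^ (1 / β) ≤ 1 :=
            Real.rpow_le_one hp.le hp1 (by positivity)
          have huq : u ^ (1 / β) = p ^ (1 / β) / 2 ^ (1 / β) := by
            rw [hudef, Real.div_rpow hp.le (by norm_num)]
          have hxD : x ≤ D / p ^ (1 / β) := by
            have hxm2 : x + m ≤ C / u ^ (1 / β) := by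
              rw [le_div_iff₀ hup]; linarith [hxm]
            have : C / u ^ (1 / β) = C * 2 ^ (1 / β) / p ^ (1 / β) := by
              rw [huq]; field_simp
            rw [this] at hxm2
            have hmabs : -m ≤ |m| / p ^ (1 / β) := by
              calc -m ≤ |m| := neg_le_abs m
                _ ≤ |m| / p ^ (1 / β) := by
                    rw [le_div_iff₀ hqp]
                    nlinarith [abs_nonneg m]
            calc x = (x + m) + (-m) := by ring
              _ ≤ C * 2 ^ (1 / β) / p ^ (1 / β) + |m| / p ^ (1 / β) := by linarith
              _ = D / p ^ (1 / β) := by rw [hDdef]; ring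
          have hxβ : x ^ β ≤ D ^ β / p := by
            have := Real.rpow_le_rpow hx hxD hβ.le
            rwa [Real.div_rpow hD0 hqp.le, one_div,
              Real.rpow_inv_rpow hp.le hβ.ne'] at this
          rw [le_div_iff₀ hp] at hxβ
          exact hxβ
      refine ⟨2 * D ^ β, fun x hx => ?_⟩
      have h1 := hright x hx
      have h2 := hleft x hx
      nlinarith [Real.rpow_nonneg hx β]
  · exact key_bound μ β hβ
end

section
/- Let μ be a probability measure on ℝ with cdf F, ρ ≥ 1, α ∈ (0, 1/ρ). If limsup_{x→∞} x^{ρ/(1−αρ)}(F(−x)+1−F(x)) ∈ (0,∞), then for any sequence (y_N) of positive reals increasing to +∞ with limsup_N y_{N+1}/y_N < ∞, limsup_{N→∞} y_N^{αρ²/(1−αρ)} ∫_{y_N}^∞ y^{ρ−1}(F(−y)+1−F(y)) dy ∈ (0,∞). -/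
open MeasureTheory ProbabilityTheory Filter Set

theorem stmt13 (μ : Measure ℝ) [IsProbabilityMeasure μ] (ρ α : ℝ) (hρ : 1 ≤ ρ)
    (hα : 0 < α) (hαρ : α < 1 / ρ)
    (hbdd : IsBoundedUnder (· ≤ ·) atTop
      (fun x : ℝ => x ^ (ρ / (1 - α * ρ)) * (cdf μ (-x) + 1 - cdf μ x)))
    (hpos : 0 < Filter.limsup
      (fun x : ℝ => x ^ (ρ / (1 - α * ρ)) * (cdf μ (-x) + 1 - cdf μ x)) Filter.atTop)
    (y : ℕ → ℝ) (hy0 : ∀ N, 0 < y N) (hymono : Monotone y)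
    (hytop : Tendsto y atTop atTop)
    (hyratio : IsBoundedUnder (· ≤ ·) atTop (fun N => y (N + 1) / y N)) :
    0 < Filter.limsup
        (fun N : ℕ => (y N) ^ (α * ρ ^ 2 / (1 - α * ρ)) *
          ∫ t in Set.Ioi (y N), t ^ (ρ - 1) * (cdf μ (-t) + 1 - cdf μ t)) Filter.atTop ∧
      IsBoundedUnder (· ≤ ·) atTop
        (fun N : ℕ => (y N) ^ (α * ρ ^ 2 / (1 - α * ρ)) *
          ∫ t in Set.Ioi (y N), t ^ (ρ - 1) * (cdf μ (-t) + 1 - cdf μ t)) := by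
  classical
  have hρ0 : (0:ℝ) < ρ := lt_of_lt_of_le one_pos hρ
  have h1αρ : 0 < 1 - α * ρ := by
    have h := mul_lt_mul_of_pos_right hαρ hρ0
    rw [one_div, inv_mul_cancel₀ hρ0.ne'] at h
    linarith
  set G : ℝ → ℝ := fun t => cdf μ (-t) + 1 - cdf μ t with hGdef
  have hG : ∀ x : ℝ, cdf μ (-x) + 1 - cdf μ x = G x := fun x => by rw [hGdef]
  simp only [hG] at hbdd hpos ⊢
  set β : ℝ := ρ / (1 - α * ρ) with hβdef
  set e : ℝ := α * ρ ^ 2 / (1 - α * ρ) with hedef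
  have he : β = ρ + e := by
    rw [hβdef, hedef, div_eq_iff h1αρ.ne', add_mul, div_mul_cancel₀ _ h1αρ.ne']; ring
  have he0 : 0 < e := by
    rw [hedef]; positivity
  have hβ0 : 0 < β := div_pos hρ0 h1αρ
  have hGnn : ∀ t, 0 ≤ G t := fun t => by
    have h1 := cdf_nonneg μ (-t); have h2 := cdf_le_one μ t
    simp only [hGdef]; linarith
  have hGle2 : ∀ t, G t ≤ 2 := fun t => by
    have h1 := cdf_le_one μ (-t); have h2 := cdf_nonneg μ t
    simp only [hGdef]; linarith
  have hGanti : Antitone G := by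
    intro s t hst
    have h1 : cdf μ (-t) ≤ cdf μ (-s) := monotone_cdf μ (by linarith)
    have h2 : cdf μ s ≤ cdf μ t := monotone_cdf μ hst
    simp only [hGdef]; linarith
  have hGmeas : Measurable G := by
    have hm : Measurable (cdf μ) := (monotone_cdf μ).measurable
    exact ((hm.comp measurable_neg).add measurable_const).sub hm
  have hmeasInt : Measurable fun t : ℝ => t ^ (ρ - 1) * G t :=
    (Real.continuous_rpow_const (by linarith : (0:ℝ) ≤ ρ - 1)).measurable.mul hGmeas
  -- bound from hbdd
  obtain ⟨C, hC⟩ := hbdd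
  rw [eventually_map] at hC
  obtain ⟨x0, hx0⟩ := eventually_atTop.1 hC
  set x1 : ℝ := max x0 1 with hx1def
  have hx1ge1 : (1:ℝ) ≤ x1 := le_max_right _ _
  have hx1pos : (0:ℝ) < x1 := lt_of_lt_of_le one_pos hx1ge1
  have hCb : ∀ x : ℝ, x1 ≤ x → x ^ β * G x ≤ C := fun x hx =>
    hx0 x (le_trans (le_max_left _ _) hx)
  have hC0 : 0 ≤ C :=
    le_trans (mul_nonneg (Real.rpow_nonneg hx1pos.le _) (hGnn x1)) (hCb x1 le_rfl)
  have hGtail : ∀ x : ℝ, x1 ≤ x → G x ≤ C * x ^ (-β) := by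
    intro x hx
    have hxpos : 0 < x := lt_of_lt_of_le hx1pos hx
    have hxb : 0 < x ^ β := Real.rpow_pos_of_pos hxpos β
    rw [Real.rpow_neg hxpos.le, ← div_eq_mul_inv, le_div_iff₀ hxb]
    calc G x * x ^ β = x ^ β * G x := by ring
      _ ≤ C := hCb x hx
  -- integrability
  have hInt : ∀ a : ℝ, 0 < a → IntegrableOn (fun t => t ^ (ρ - 1) * G t) (Ioi a) := by
    intro a ha
    have hb : a ≤ max a x1 := le_max_left _ _
    have hb1 : x1 ≤ max a x1 := le_max_right _ _
    have hb0 : 0 < max a x1 := lt_of_lt_of_le ha hb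
    have h1 : IntegrableOn (fun t => t ^ (ρ - 1) * G t) (Ioc a (max a x1)) := by
      apply Measure.integrableOn_of_bounded (M := (max a x1) ^ (ρ - 1) * 2)
        measure_Ioc_lt_top.ne hmeasInt.aestronglyMeasurable
      filter_upwards [ae_restrict_mem measurableSet_Ioc] with t ht
      have ht0 : 0 < t := ha.trans ht.1
      rw [Real.norm_eq_abs, abs_of_nonneg (mul_nonneg (Real.rpow_nonneg ht0.le _) (hGnn t))]
      exact mul_le_mul (Real.rpow_le_rpow ht0.le ht.2 (by linarith)) (hGle2 t) (hGnn t)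
        (Real.rpow_nonneg hb0.le _)
    have h2 : IntegrableOn (fun t => t ^ (ρ - 1) * G t) (Ioi (max a x1)) := by
      have hint : IntegrableOn (fun t : ℝ => C * t ^ (ρ - 1 - β)) (Ioi (max a x1)) :=
        (integrableOn_Ioi_rpow_of_lt (by rw [he]; linarith) hb0).const_mul C
      refine Integrable.mono' hint hmeasInt.aestronglyMeasurable ?_
      filter_upwards [ae_restrict_mem measurableSet_Ioi] with t ht
      have hx1t : x1 ≤ t := hb1.trans (le_of_lt ht)
      have ht0 : 0 < t := hb0.trans ht
      rw [Real.norm_eq_abs, abs_of_nonneg (mul_nonneg (Real.rpow_nonneg ht0.le _) (hGnn t))]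
      calc t ^ (ρ-1) * G t ≤ t ^ (ρ-1) * (C * t ^ (-β)) :=
            mul_le_mul_of_nonneg_left (hGtail t hx1t) (Real.rpow_nonneg ht0.le _)
        _ = C * (t ^ (ρ-1) * t ^ (-β)) := by ring
        _ = C * t ^ (ρ - 1 - β) := by rw [← Real.rpow_add ht0]; ring_nf
    have h3 := h1.union h2
    rwa [Ioc_union_Ioi_eq_Ioi hb] at h3
  -- upper bound
  have hub : ∀ x : ℝ, x1 ≤ x → x ^ e * ∫ t in Ioi x, t ^ (ρ-1) * G t ≤ C / e := by
    intro x hx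
    have hxpos : 0 < x := lt_of_lt_of_le hx1pos hx
    have hI := hInt x hxpos
    have hintC : IntegrableOn (fun t : ℝ => C * t ^ (ρ-1-β)) (Ioi x) :=
      (integrableOn_Ioi_rpow_of_lt (by rw [he]; linarith) hxpos).const_mul C
    have hmono : (∫ t in Ioi x, t ^ (ρ-1) * G t) ≤ ∫ t in Ioi x, C * t ^ (ρ-1-β) := by
      apply setIntegral_mono_on hI hintC measurableSet_Ioi
      intro t ht
      have ht0 : 0 < t := hxpos.trans ht
      calc t ^ (ρ-1) * G t ≤ t ^ (ρ-1) * (C * t ^ (-β)) :=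
            mul_le_mul_of_nonneg_left (hGtail t (hx.trans ht.le)) (Real.rpow_nonneg ht0.le _)
        _ = C * (t ^ (ρ-1) * t ^ (-β)) := by ring
        _ = C * t ^ (ρ-1-β) := by rw [← Real.rpow_add ht0]; ring_nf
    have hval : (∫ t in Ioi x, C * t ^ (ρ-1-β)) = C * (x ^ (-e) / e) := by
      rw [integral_const_mul, integral_Ioi_rpow_of_lt (by rw [he]; linarith) hxpos]
      have h4 : ρ - 1 - β + 1 = -e := by rw [he]; ring
      rw [h4]
      rw [neg_div, div_neg, neg_neg]
    have hone : x ^ e * x ^ (-e) = 1 := by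
      rw [← Real.rpow_add hxpos]; simp
    calc x ^ e * ∫ t in Ioi x, t ^ (ρ-1) * G t
        ≤ x ^ e * (C * (x ^ (-e) / e)) := by
          apply mul_le_mul_of_nonneg_left (hmono.trans hval.le) (Real.rpow_nonneg hxpos.le _)
      _ = (x ^ e * x ^ (-e)) * (C / e) := by ring
      _ = C / e := by rw [hone, one_mul]
  have hbound : IsBoundedUnder (· ≤ ·) atTop
      (fun N : ℕ => y N ^ e * ∫ t in Ioi (y N), t ^ (ρ-1) * G t) := by
    refine ⟨C / e, ?_⟩
    rw [eventually_map]
    filter_upwards [hytop.eventually_ge_atTop x1] with N hN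
    exact hub (y N) hN
  -- lower bound pointwise
  have hlb : ∀ z : ℝ, 0 < z → z ^ β * G (2*z) ≤ z ^ e * ∫ t in Ioi z, t ^ (ρ-1) * G t := by
    intro z hz
    have hI := hInt z hz
    have h2z : z < 2*z := by linarith
    have hIoc : IntegrableOn (fun t => t ^ (ρ-1) * G t) (Ioc z (2*z)) :=
      hI.mono_set Ioc_subset_Ioi_self
    have hconst : IntegrableOn (fun _ : ℝ => z ^ (ρ-1) * G (2*z)) (Ioc z (2*z)) :=
      integrableOn_const measure_Ioc_lt_top.ne
    have step1 : z ^ (ρ-1) * G (2*z) * z ≤ ∫ t in Ioc z (2*z), t ^ (ρ-1) * G t := by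
      have h1 : (∫ _t in Ioc z (2*z), (z ^ (ρ-1) * G (2*z))) ≤
          ∫ t in Ioc z (2*z), t ^ (ρ-1) * G t := by
        apply setIntegral_mono_on hconst hIoc measurableSet_Ioc
        intro t ht
        exact mul_le_mul (Real.rpow_le_rpow hz.le ht.1.le (by linarith)) (hGanti ht.2)
          (hGnn _) (Real.rpow_nonneg (hz.trans ht.1).le _)
      rw [setIntegral_const, Measure.real, Real.volume_Ioc, smul_eq_mul] at h1
      have hvol : (ENNReal.ofReal (2*z - z)).toReal = z := by
        rw [ENNReal.toReal_ofReal (by linarith)]; ring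
      rw [hvol] at h1
      linarith [h1, mul_comm z (z ^ (ρ-1) * G (2*z))]
    have step2 : (∫ t in Ioc z (2*z), t ^ (ρ-1) * G t) ≤ ∫ t in Ioi z, t ^ (ρ-1) * G t := by
      apply setIntegral_mono_set hI
      · filter_upwards [ae_restrict_mem measurableSet_Ioi] with t ht
        exact mul_nonneg (Real.rpow_nonneg (hz.trans ht).le _) (hGnn t)
      · exact HasSubset.Subset.eventuallyLE Ioc_subset_Ioi_self
    have hiden : z ^ β * G (2*z) = z ^ e * (z ^ (ρ-1) * G (2*z) * z) := by
      have h5 : z ^ e * z ^ (ρ-1) * z ^ (1:ℝ) = z ^ (e + (ρ-1) + 1) := by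
        rw [Real.rpow_add hz, Real.rpow_add hz]
      have h6 : e + (ρ-1) + 1 = β := by rw [he]; ring
      rw [h6] at h5
      rw [Real.rpow_one] at h5
      calc z ^ β * G (2*z) = z ^ e * z ^ (ρ-1) * z * G (2*z) := by rw [h5]
        _ = z ^ e * (z ^ (ρ-1) * G (2*z) * z) := by ring
    rw [hiden]
    exact mul_le_mul_of_nonneg_left (step1.trans step2) (Real.rpow_nonneg hz.le _)
  -- frequently positive
  have hpos' : 0 < limsup (fun x : ℝ => x ^ β * G x) atTop := hpos
  have hcob : IsCoboundedUnder (· ≤ ·) atTop (fun x : ℝ => x ^ β * G x) := by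
    apply isCoboundedUnder_le_of_eventually_le atTop (x := 0)
    filter_upwards [eventually_ge_atTop (0:ℝ)] with x hx
    exact mul_nonneg (Real.rpow_nonneg hx _) (hGnn x)
  set L := limsup (fun x : ℝ => x ^ β * G x) atTop with hLdef
  have hfreq : ∃ᶠ x in atTop, L/2 < x ^ β * G x :=
    frequently_lt_of_lt_limsup hcob (by linarith)
  obtain ⟨R0, hR0⟩ := hyratio
  rw [eventually_map] at hR0
  obtain ⟨N0, hN0⟩ := eventually_atTop.1 hR0
  set R : ℝ := max R0 1 with hRdef
  have hR1 : (1:ℝ) ≤ R := le_max_right _ _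
  have hRpos : (0:ℝ) < R := lt_of_lt_of_le one_pos hR1
  have hRstep : ∀ N, N0 ≤ N → y (N+1) ≤ R * y N := by
    intro N hN
    have h7 : y (N+1) / y N ≤ R := (hN0 N hN).trans (le_max_left R0 1)
    rw [div_le_iff₀ (hy0 N)] at h7
    linarith [mul_comm R (y N)]
  have hfreqN : ∃ᶠ N in atTop,
      R ^ (-e) * (2 ^ (-β) * (L/2)) ≤ y N ^ e * ∫ t in Ioi (y N), t ^ (ρ-1) * G t := by
    rw [frequently_atTop]
    intro m
    set m' := max m N0 with hm'def
    obtain ⟨x, hx, hxL⟩ := (frequently_atTop.1 hfreq) (max (2*x1) (2 * y m'))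
    have hx1' : x1 ≤ x/2 := by
      have := le_trans (le_max_left (2*x1) (2 * y m')) hx; linarith
    have hzy : y m' ≤ x/2 := by
      have := le_trans (le_max_right (2*x1) (2 * y m')) hx; linarith
    set z := x/2 with hzdef
    have hz0 : 0 < z := lt_of_lt_of_le hx1pos hx1'
    have hx2z : x = 2*z := by rw [hzdef]; ring
    have hex : ∃ n, z < y n := (hytop.eventually_gt_atTop z).exists
    set n1 := Nat.find hex with hn1def
    have hn1spec : z < y n1 := Nat.find_spec hex
    have hm'lt : m' < n1 := by
      by_contra h
      push_neg at h
      exact absurd (lt_of_lt_of_le hn1spec (hymono h)) (not_lt.2 hzy)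
    set N := n1 - 1 with hNdef
    have hNsucc : N + 1 = n1 := by omega
    have hyNz : y N ≤ z := by
      have h8 := Nat.find_min hex (show N < n1 by omega)
      push_neg at h8
      exact h8
    have hyN1 : z < y (N+1) := by rw [hNsucc]; exact hn1spec
    have hN0N : N0 ≤ N := by
      have : N0 ≤ m' := le_max_right m N0
      omega
    have hyNlb : z / R ≤ y N := by
      have h9 : y (N+1) ≤ R * y N := hRstep N hN0N
      rw [div_le_iff₀ hRpos]
      nlinarith [hy0 N]
    refine ⟨N, by have : m ≤ m' := le_max_left m N0; omega, ?_⟩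
    have hchain1 : z ^ β * G (2*z) ≤ z ^ e * ∫ t in Ioi z, t ^ (ρ-1) * G t := hlb z hz0
    have hIyN := hInt (y N) (hy0 N)
    have hsub : (∫ t in Ioi z, t ^ (ρ-1) * G t) ≤ ∫ t in Ioi (y N), t ^ (ρ-1) * G t := by
      apply setIntegral_mono_set hIyN
      · filter_upwards [ae_restrict_mem measurableSet_Ioi] with t ht
        exact mul_nonneg (Real.rpow_nonneg ((hy0 N).trans ht).le _) (hGnn t)
      · exact HasSubset.Subset.eventuallyLE (Ioi_subset_Ioi hyNz)
    have hmul : (z/R) ^ e ≤ y N ^ e := Real.rpow_le_rpow (by positivity) hyNlb he0.le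
    have hintnn : 0 ≤ ∫ t in Ioi z, t ^ (ρ-1) * G t :=
      setIntegral_nonneg measurableSet_Ioi fun t ht =>
        mul_nonneg (Real.rpow_nonneg (hz0.trans ht).le _) (hGnn t)
    have hid1 : R ^ (-e) * (2 ^ (-β) * (x ^ β * G x)) = R ^ (-e) * (z ^ β * G (2*z)) := by
      rw [hx2z, Real.mul_rpow (by norm_num) hz0.le, Real.rpow_neg (by norm_num : (0:ℝ) ≤ 2)]
      have h2b : (0:ℝ) < 2 ^ β := Real.rpow_pos_of_pos (by norm_num) β
      field_simp
    have hid2 : R ^ (-e) * (z ^ e * ∫ t in Ioi z, t ^ (ρ-1) * G t) =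
        (z/R) ^ e * ∫ t in Ioi z, t ^ (ρ-1) * G t := by
      rw [Real.div_rpow hz0.le hRpos.le, Real.rpow_neg hRpos.le, div_eq_mul_inv]
      ring
    calc R ^ (-e) * (2 ^ (-β) * (L/2))
        ≤ R ^ (-e) * (2 ^ (-β) * (x ^ β * G x)) := by
          apply mul_le_mul_of_nonneg_left _ (Real.rpow_nonneg hRpos.le _)
          exact mul_le_mul_of_nonneg_left hxL.le (Real.rpow_nonneg (by norm_num) _)
      _ = R ^ (-e) * (z ^ β * G (2*z)) := hid1
      _ ≤ R ^ (-e) * (z ^ e * ∫ t in Ioi z, t ^ (ρ-1) * G t) :=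
          mul_le_mul_of_nonneg_left hchain1 (Real.rpow_nonneg hRpos.le _)
      _ = (z/R) ^ e * ∫ t in Ioi z, t ^ (ρ-1) * G t := hid2
      _ ≤ y N ^ e * ∫ t in Ioi z, t ^ (ρ-1) * G t :=
          mul_le_mul_of_nonneg_right hmul hintnn
      _ ≤ y N ^ e * ∫ t in Ioi (y N), t ^ (ρ-1) * G t :=
          mul_le_mul_of_nonneg_left hsub (Real.rpow_nonneg (hy0 N).le _)
  refine ⟨?_, hbound⟩
  have hc' : 0 < R ^ (-e) * (2 ^ (-β) * (L/2)) := by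
    have := Real.rpow_pos_of_pos hRpos (-e)
    have := Real.rpow_pos_of_pos (show (0:ℝ) < 2 by norm_num) (-β)
    have : 0 < L/2 := by linarith
    positivity
  exact lt_of_lt_of_le hc' (le_limsup_of_frequently_le hfreqN hbound)
end
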